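/- arXiv:1709.02102 — 4 statements merged into one kernel-verified Lean document; each statement's English description precedes it below -/
import Mathlib

section
/- For every ω-word w and LTL formulas φ, ψ, w satisfies FG(φ ∨ G ψ) if and only if w satisfies FG φ ∨ FG ψ. -/
inductive LTL (Ap : Type) : Type
  | tt : LTL Ap
  | ff : LTL Ap
  | atom : Ap → LTL Ap
  | natom : Ap → LTL Ap
  | and : LTL Ap → LTL Ap → LTL Ap
  | or : LTL Ap → LTL Ap → LTL Ap
  | next : LTL Ap → LTL Ap
  | untl : LTL Ap → LTL Ap → LTL Ap
  | release : LTL Ap → LTL Ap → LTL Ap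

def LTL.F {Ap : Type} (φ : LTL Ap) : LTL Ap := LTL.untl LTL.tt φ
def LTL.G {Ap : Type} (φ : LTL Ap) : LTL Ap := LTL.release LTL.ff φ

/-- suffix w_i of the ω-word w -/
def suff {Ap : Type} (w : ℕ → Set Ap) (i : ℕ) : ℕ → Set Ap := fun j => w (i + j)

/-- LTL satisfaction relation w ⊨ φ -/
def Sat {Ap : Type} : (ℕ → Set Ap) → LTL Ap → Prop
  | _, .tt => True
  | _, .ff => False
  | w, .atom a => a ∈ w 0
  | w, .natom a => a ∉ w 0
  | w, .and φ ψ => Sat w φ ∧ Sat w ψ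
  | w, .or φ ψ => Sat w φ ∨ Sat w ψ
  | w, .next φ => Sat (suff w 1) φ
  | w, .untl φ ψ => ∃ i, Sat (suff w i) ψ ∧ ∀ j < i, Sat (suff w j) φ
  | w, .release φ ψ =>
      (∀ i, Sat (suff w i) ψ) ∨ ∃ i, Sat (suff w i) φ ∧ ∀ j, j ≤ i → Sat (suff w j) ψ

theorem FG_or_G {Ap : Type} (w : ℕ → Set Ap) (φ ψ : LTL Ap) :
    Sat w (LTL.F (LTL.G (LTL.or φ (LTL.G ψ)))) ↔
      Sat w (LTL.or (LTL.F (LTL.G φ)) (LTL.F (LTL.G ψ))) := by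
  have hs : ∀ (v : ℕ → Set Ap) i j, suff (suff v i) j = suff v (i + j) := by
    intro v i j; funext k; simp [suff, Nat.add_assoc]
  simp only [LTL.F, LTL.G, Sat, hs]
  constructor
  · rintro ⟨i, h, -⟩
    rcases h with h | ⟨k, hk, -⟩
    · by_cases hψ : ∃ j, (∀ k, Sat (suff w (i + j + k)) ψ) ∨
        ∃ k, False ∧ ∀ l ≤ k, Sat (suff w (i + j + l)) ψ
      · rcases hψ with ⟨j, hj | ⟨_, hF, _⟩⟩
        · right
          exact ⟨i + j, Or.inl (fun k => hj k), fun _ _ => trivial⟩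
        · exact absurd hF id
      · left
        refine ⟨i, Or.inl ?_, fun _ _ => trivial⟩
        intro j
        rcases h j with hφ | hG
        · exact hφ
        · exact absurd ⟨j, by simpa [hs] using hG⟩ hψ
    · exact hk.elim
  · rintro (⟨i, h | ⟨_, hF, _⟩, -⟩ | ⟨i, h | ⟨_, hF, _⟩, -⟩)
    · exact ⟨i, Or.inl (fun j => Or.inl (h j)), fun _ _ => trivial⟩
    · exact absurd hF id
    · refine ⟨i, Or.inl (fun j => Or.inr (Or.inl ?_)), fun _ _ => trivial⟩
      intro k; simpa [Nat.add_assoc] using h (j + k)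
    · exact absurd hF id
end

section
/- Every formula of the fairness fragment LTL_{FG,GF}(F,G,X) — i.e., every Boolean combination of formulas of the form FG φ or GF φ where φ ∈ LTL(F,G,X) — is equivalent to a Boolean combination of formulas of the form FG ψ or GF ψ with ψ ∈ LTL(X) (ψ contains only Boolean connectives and the next operator X). -/
/-- LTL(X): only literals, ∧, ∨ and the next operator -/
inductive OnlyX {Ap : Type} : LTL Ap → Prop
  | tt : OnlyX .tt
  | ff : OnlyX .ff
  | atom (a : Ap) : OnlyX (.atom a)
  | natom (a : Ap) : OnlyX (.natom a)
  | and {φ ψ : LTL Ap} : OnlyX φ → OnlyX ψ → OnlyX (.and φ ψ)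
  | or {φ ψ : LTL Ap} : OnlyX φ → OnlyX ψ → OnlyX (.or φ ψ)
  | next {φ : LTL Ap} : OnlyX φ → OnlyX (.next φ)

/-- LTL(F,G,X): literals, ∧, ∨, F, G and X -/
inductive OnlyFGX {Ap : Type} : LTL Ap → Prop
  | tt : OnlyFGX .tt
  | ff : OnlyFGX .ff
  | atom (a : Ap) : OnlyFGX (.atom a)
  | natom (a : Ap) : OnlyFGX (.natom a)
  | and {φ ψ : LTL Ap} : OnlyFGX φ → OnlyFGX ψ → OnlyFGX (.and φ ψ)
  | or {φ ψ : LTL Ap} : OnlyFGX φ → OnlyFGX ψ → OnlyFGX (.or φ ψ)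
  | next {φ : LTL Ap} : OnlyFGX φ → OnlyFGX (.next φ)
  | evtl {φ : LTL Ap} : OnlyFGX φ → OnlyFGX (LTL.F φ)
  | alws {φ : LTL Ap} : OnlyFGX φ → OnlyFGX (LTL.G φ)

/-- Boolean combinations of FG φ and GF φ with φ satisfying P -/
inductive FairFrag {Ap : Type} (P : LTL Ap → Prop) : LTL Ap → Prop
  | FG {φ : LTL Ap} : P φ → FairFrag P (LTL.F (LTL.G φ))
  | GF {φ : LTL Ap} : P φ → FairFrag P (LTL.G (LTL.F φ))
  | and {φ ψ : LTL Ap} : FairFrag P φ → FairFrag P ψ → FairFrag P (.and φ ψ)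
  | or {φ ψ : LTL Ap} : FairFrag P φ → FairFrag P ψ → FairFrag P (.or φ ψ)

namespace FairAux

variable {Ap : Type}

/-- number of U/R operators (counts F and G) -/
def fgc : LTL Ap → ℕ
  | .tt => 0
  | .ff => 0
  | .atom _ => 0
  | .natom _ => 0
  | .and φ ψ => fgc φ + fgc ψ
  | .or φ ψ => fgc φ + fgc ψ
  | .next φ => fgc φ
  | .untl φ ψ => fgc φ + fgc ψ + 1
  | .release φ ψ => fgc φ + fgc ψ + 1

lemma suff_suff (w : ℕ → Set Ap) (i j : ℕ) : suff (suff w i) j = suff w (i + j) := by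
  funext k; simp [suff, Nat.add_assoc]

lemma sat_F {w : ℕ → Set Ap} {φ : LTL Ap} :
    Sat w (LTL.F φ) ↔ ∃ i, Sat (suff w i) φ := by
  constructor
  · rintro ⟨i, h, -⟩; exact ⟨i, h⟩
  · rintro ⟨i, h⟩; exact ⟨i, h, fun j _ => trivial⟩

lemma sat_G {w : ℕ → Set Ap} {φ : LTL Ap} :
    Sat w (LTL.G φ) ↔ ∀ i, Sat (suff w i) φ := by
  constructor
  · rintro (h | ⟨i, h, -⟩)
    · exact h
    · exact h.elim
  · intro h; exact Or.inl h

lemma sat_F' {w : ℕ → Set Ap} {φ : LTL Ap} (p : ℕ) :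
    Sat (suff w p) (LTL.F φ) ↔ ∃ q, p ≤ q ∧ Sat (suff w q) φ := by
  rw [sat_F]
  constructor
  · rintro ⟨i, h⟩; rw [suff_suff] at h; exact ⟨p + i, Nat.le_add_right _ _, h⟩
  · rintro ⟨q, hpq, h⟩
    refine ⟨q - p, ?_⟩
    rw [suff_suff, Nat.add_sub_cancel' hpq]; exact h

lemma sat_G' {w : ℕ → Set Ap} {φ : LTL Ap} (p : ℕ) :
    Sat (suff w p) (LTL.G φ) ↔ ∀ q, p ≤ q → Sat (suff w q) φ := by
  rw [sat_G]
  constructor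
  · intro h q hpq
    have := h (q - p); rwa [suff_suff, Nat.add_sub_cancel' hpq] at this
  · intro h i; rw [suff_suff]; exact h _ (Nat.le_add_right _ _)

/-- semantic "infinitely often" -/
def SGF (w : ℕ → Set Ap) (φ : LTL Ap) : Prop := ∀ i, ∃ p, i ≤ p ∧ Sat (suff w p) φ
/-- semantic "eventually always" -/
def SFG (w : ℕ → Set Ap) (φ : LTL Ap) : Prop := ∃ i, ∀ p, i ≤ p → Sat (suff w p) φ

lemma sat_GF {w : ℕ → Set Ap} {φ : LTL Ap} :
    Sat w (LTL.G (LTL.F φ)) ↔ SGF w φ := by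
  rw [sat_G]
  constructor
  · intro h i; exact (sat_F' i).mp (h i)
  · intro h i; exact (sat_F' i).mpr (h i)

lemma sat_FG {w : ℕ → Set Ap} {φ : LTL Ap} :
    Sat w (LTL.F (LTL.G φ)) ↔ SFG w φ := by
  rw [sat_F]
  constructor
  · rintro ⟨i, h⟩; exact ⟨i, (sat_G' i).mp h⟩
  · rintro ⟨i, h⟩; exact ⟨i, (sat_G' i).mpr h⟩

/-- finite intersection of eventual properties -/
lemma listEv {X : Type*} (L : List X) (R : X → ℕ → Prop)
    (h : ∀ x ∈ L, ∃ N, ∀ p, N ≤ p → R x p) :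
    ∃ N, ∀ p, N ≤ p → ∀ x ∈ L, R x p := by
  induction L with
  | nil => exact ⟨0, by simp⟩
  | cons a L ih =>
    obtain ⟨N1, h1⟩ := h a (by simp)
    obtain ⟨N2, h2⟩ := ih (fun x hx => h x (by simp [hx]))
    refine ⟨max N1 N2, fun p hp x hx => ?_⟩
    rcases List.mem_cons.mp hx with rfl | hx
    · exact h1 p (le_trans (le_max_left _ _) hp)
    · exact h2 p (le_trans (le_max_right _ _) hp) x hx

/-- pigeonhole: a recurring property over a finite list has a recurring member -/
lemma pigeon {X : Type*} (D : List X) (P : X → ℕ → Prop)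
    (h : ∀ i, ∃ p, i ≤ p ∧ ∃ c ∈ D, P c p) :
    ∃ c ∈ D, ∀ i, ∃ p, i ≤ p ∧ P c p := by
  induction D with
  | nil => obtain ⟨p, -, c, hc, -⟩ := h 0; exact absurd hc List.not_mem_nil
  | cons c D ih =>
    by_cases hc : ∀ i, ∃ p, i ≤ p ∧ P c p
    · exact ⟨c, List.mem_cons_self, hc⟩
    · push_neg at hc
      obtain ⟨N, hN⟩ := hc
      have h' : ∀ i, ∃ p, i ≤ p ∧ ∃ c' ∈ D, P c' p := by
        intro i
        obtain ⟨p, hp, c', hc', hP⟩ := h (max i N)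
        refine ⟨p, le_trans (le_max_left _ _) hp, ?_⟩
        rcases List.mem_cons.mp hc' with rfl | hmem
        · exact absurd hP (hN p (le_trans (le_max_right _ _) hp))
        · exact ⟨c', hmem, hP⟩
      obtain ⟨c', hm, hall⟩ := ih h'
      exact ⟨c', List.mem_cons_of_mem _ hm, hall⟩

/-- a DNF conjunct / CNF clause: a pure-X part, F-arguments and G-arguments -/
abbrev Cj (Ap : Type) := LTL Ap × List (LTL Ap) × List (LTL Ap)

def SatC (w : ℕ → Set Ap) (c : Cj Ap) : Prop :=
  Sat w c.1 ∧ (∀ α ∈ c.2.1, Sat w (LTL.F α)) ∧ (∀ β ∈ c.2.2, Sat w (LTL.G β))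

def SatCl (w : ℕ → Set Ap) (c : Cj Ap) : Prop :=
  Sat w c.1 ∨ (∃ α ∈ c.2.1, Sat w (LTL.F α)) ∨ (∃ β ∈ c.2.2, Sat w (LTL.G β))

def GoodC (n : ℕ) (c : Cj Ap) : Prop :=
  OnlyX c.1 ∧ (∀ α ∈ c.2.1, OnlyFGX α ∧ fgc α < n) ∧ (∀ β ∈ c.2.2, OnlyFGX β ∧ fgc β < n)

lemma sat_and {w : ℕ → Set Ap} {φ ψ : LTL Ap} :
    Sat w (LTL.and φ ψ) ↔ Sat w φ ∧ Sat w ψ := Iff.rfl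

lemma sat_or {w : ℕ → Set Ap} {φ ψ : LTL Ap} :
    Sat w (LTL.or φ ψ) ↔ Sat w φ ∨ Sat w ψ := Iff.rfl

lemma sat_next {w : ℕ → Set Ap} {φ : LTL Ap} :
    Sat w (LTL.next φ) ↔ Sat (suff w 1) φ := Iff.rfl

lemma sat_F_next {w : ℕ → Set Ap} {φ : LTL Ap} :
    Sat w (LTL.F (LTL.next φ)) ↔ Sat (suff w 1) (LTL.F φ) := by
  rw [sat_F, sat_F]
  constructor
  · rintro ⟨i, h⟩
    rw [sat_next, suff_suff] at h
    refine ⟨i, ?_⟩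
    rw [suff_suff, Nat.add_comm 1 i]
    exact h
  · rintro ⟨i, h⟩
    rw [suff_suff] at h
    refine ⟨i, ?_⟩
    rw [sat_next, suff_suff, Nat.add_comm i 1]
    exact h

lemma sat_G_next {w : ℕ → Set Ap} {φ : LTL Ap} :
    Sat w (LTL.G (LTL.next φ)) ↔ Sat (suff w 1) (LTL.G φ) := by
  rw [sat_G, sat_G]
  constructor
  · intro h i
    rw [suff_suff]
    have := h i
    rw [sat_next, suff_suff, Nat.add_comm i 1] at this
    exact this
  · intro h i
    rw [sat_next, suff_suff, Nat.add_comm i 1]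
    have := h i
    rwa [suff_suff] at this

theorem dnf {φ : LTL Ap} (h : OnlyFGX φ) :
    ∃ D : List (Cj Ap), (∀ c ∈ D, GoodC (fgc φ) c) ∧
      ∀ w, Sat w φ ↔ ∃ c ∈ D, SatC w c := by
  induction h with
  | tt => exact ⟨[(.tt, [], [])], by simp [GoodC, OnlyX.tt], by simp [Sat, SatC]⟩
  | ff => exact ⟨[], by simp, by simp [Sat]⟩
  | atom a =>
    exact ⟨[(.atom a, [], [])], by simp [GoodC, OnlyX.atom], by simp [Sat, SatC]⟩
  | natom a =>
    exact ⟨[(.natom a, [], [])], by simp [GoodC, OnlyX.natom], by simp [Sat, SatC]⟩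
  | and h1 h2 ih1 ih2 =>
    obtain ⟨D1, hg1, hs1⟩ := ih1
    obtain ⟨D2, hg2, hs2⟩ := ih2
    refine ⟨D1.flatMap fun c1 => D2.map fun c2 =>
      (LTL.and c1.1 c2.1, c1.2.1 ++ c2.2.1, c1.2.2 ++ c2.2.2), ?_, ?_⟩
    · intro c hc
      rw [List.mem_flatMap] at hc
      obtain ⟨c1, hc1, hc⟩ := hc
      rw [List.mem_map] at hc
      obtain ⟨c2, hc2, rfl⟩ := hc
      obtain ⟨g1a, g1b, g1c⟩ := hg1 c1 hc1
      obtain ⟨g2a, g2b, g2c⟩ := hg2 c2 hc2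
      refine ⟨OnlyX.and g1a g2a, ?_, ?_⟩ <;> intro x hx <;>
        rcases List.mem_append.mp hx with hx | hx
      · exact ⟨(g1b x hx).1, by have := (g1b x hx).2; simp [fgc]; omega⟩
      · exact ⟨(g2b x hx).1, by have := (g2b x hx).2; simp [fgc]; omega⟩
      · exact ⟨(g1c x hx).1, by have := (g1c x hx).2; simp [fgc]; omega⟩
      · exact ⟨(g2c x hx).1, by have := (g2c x hx).2; simp [fgc]; omega⟩
    · intro w
      rw [sat_and, hs1 w, hs2 w]
      constructor
      · rintro ⟨⟨c1, hc1, s1a, s1b, s1c⟩, ⟨c2, hc2, s2a, s2b, s2c⟩⟩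
        refine ⟨_, List.mem_flatMap.mpr ⟨c1, hc1, List.mem_map.mpr ⟨c2, hc2, rfl⟩⟩,
          ⟨s1a, s2a⟩, ?_, ?_⟩ <;> intro x hx <;> rcases List.mem_append.mp hx with hx | hx
        · exact s1b x hx
        · exact s2b x hx
        · exact s1c x hx
        · exact s2c x hx
      · rintro ⟨c, hc, sa, sb, sc⟩
        rw [List.mem_flatMap] at hc
        obtain ⟨c1, hc1, hc⟩ := hc
        rw [List.mem_map] at hc
        obtain ⟨c2, hc2, rfl⟩ := hc
        exact ⟨⟨c1, hc1, sa.1, fun x hx => sb x (List.mem_append_left _ hx),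
            fun x hx => sc x (List.mem_append_left _ hx)⟩,
          ⟨c2, hc2, sa.2, fun x hx => sb x (List.mem_append_right _ hx),
            fun x hx => sc x (List.mem_append_right _ hx)⟩⟩
  | or h1 h2 ih1 ih2 =>
    obtain ⟨D1, hg1, hs1⟩ := ih1
    obtain ⟨D2, hg2, hs2⟩ := ih2
    refine ⟨D1 ++ D2, ?_, ?_⟩
    · intro c hc
      rcases List.mem_append.mp hc with hc | hc
      · obtain ⟨ga, gb, gc⟩ := hg1 c hc
        exact ⟨ga, fun x hx => ⟨(gb x hx).1, by have := (gb x hx).2; simp [fgc]; omega⟩,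
          fun x hx => ⟨(gc x hx).1, by have := (gc x hx).2; simp [fgc]; omega⟩⟩
      · obtain ⟨ga, gb, gc⟩ := hg2 c hc
        exact ⟨ga, fun x hx => ⟨(gb x hx).1, by have := (gb x hx).2; simp [fgc]; omega⟩,
          fun x hx => ⟨(gc x hx).1, by have := (gc x hx).2; simp [fgc]; omega⟩⟩
    · intro w
      rw [sat_or, hs1 w, hs2 w]
      constructor
      · rintro (⟨c, hc, hs⟩ | ⟨c, hc, hs⟩)
        · exact ⟨c, List.mem_append_left _ hc, hs⟩
        · exact ⟨c, List.mem_append_right _ hc, hs⟩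
      · rintro ⟨c, hc, hs⟩
        rcases List.mem_append.mp hc with hc | hc
        · exact Or.inl ⟨c, hc, hs⟩
        · exact Or.inr ⟨c, hc, hs⟩
  | next h1 ih =>
    obtain ⟨D, hg, hs⟩ := ih
    refine ⟨D.map fun c => (LTL.next c.1, c.2.1.map LTL.next, c.2.2.map LTL.next), ?_, ?_⟩
    · intro c hc
      rw [List.mem_map] at hc
      obtain ⟨c0, hc0, rfl⟩ := hc
      obtain ⟨ga, gb, gc⟩ := hg c0 hc0
      refine ⟨OnlyX.next ga, ?_, ?_⟩ <;> intro x hx <;>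
        obtain ⟨x0, hx0, rfl⟩ := List.mem_map.mp hx
      · exact ⟨OnlyFGX.next (gb x0 hx0).1, by have := (gb x0 hx0).2; simpa [fgc] using this⟩
      · exact ⟨OnlyFGX.next (gc x0 hx0).1, by have := (gc x0 hx0).2; simpa [fgc] using this⟩
    · intro w
      rw [sat_next, hs (suff w 1)]
      constructor
      · rintro ⟨c, hc, sa, sb, sc⟩
        refine ⟨_, List.mem_map.mpr ⟨c, hc, rfl⟩, sa, ?_, ?_⟩ <;> intro x hx <;>
          obtain ⟨x0, hx0, rfl⟩ := List.mem_map.mp hx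
        · exact sat_F_next.mpr (sb x0 hx0)
        · exact sat_G_next.mpr (sc x0 hx0)
      · rintro ⟨c, hc, sa, sb, sc⟩
        obtain ⟨c0, hc0, rfl⟩ := List.mem_map.mp hc
        refine ⟨c0, hc0, sa, ?_, ?_⟩ <;> intro x hx
        · exact sat_F_next.mp (sb _ (List.mem_map.mpr ⟨x, hx, rfl⟩))
        · exact sat_G_next.mp (sc _ (List.mem_map.mpr ⟨x, hx, rfl⟩))
  | evtl h1 hih =>
    rename_i φ0
    clear hih
    refine ⟨[(.tt, [φ0], [])], ?_, ?_⟩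
    · simp only [List.mem_singleton, forall_eq, GoodC]
      exact ⟨OnlyX.tt, ⟨h1, by simp [LTL.F, fgc]⟩, by simp⟩
    · intro w
      simp [SatC, Sat]
  | alws h1 hih =>
    rename_i φ0
    clear hih
    refine ⟨[(.tt, [], [φ0])], ?_, ?_⟩
    · simp only [List.mem_singleton, forall_eq, GoodC]
      exact ⟨OnlyX.tt, by simp, ⟨h1, by simp [LTL.G, fgc]⟩⟩
    · intro w
      simp [SatC, Sat]

theorem cnf {φ : LTL Ap} (h : OnlyFGX φ) :
    ∃ C : List (Cj Ap), (∀ c ∈ C, GoodC (fgc φ) c) ∧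
      ∀ w, Sat w φ ↔ ∀ c ∈ C, SatCl w c := by
  induction h with
  | tt => exact ⟨[], by simp, by simp [Sat]⟩
  | ff => exact ⟨[(.ff, [], [])], by simp [GoodC, OnlyX.ff], by simp [Sat, SatCl]⟩
  | atom a =>
    exact ⟨[(.atom a, [], [])], by simp [GoodC, OnlyX.atom], by simp [Sat, SatCl]⟩
  | natom a =>
    exact ⟨[(.natom a, [], [])], by simp [GoodC, OnlyX.natom], by simp [Sat, SatCl]⟩
  | and h1 h2 ih1 ih2 =>
    obtain ⟨C1, hg1, hs1⟩ := ih1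
    obtain ⟨C2, hg2, hs2⟩ := ih2
    refine ⟨C1 ++ C2, ?_, ?_⟩
    · intro c hc
      rcases List.mem_append.mp hc with hc | hc
      · obtain ⟨ga, gb, gc⟩ := hg1 c hc
        exact ⟨ga, fun x hx => ⟨(gb x hx).1, by have := (gb x hx).2; simp [fgc]; omega⟩,
          fun x hx => ⟨(gc x hx).1, by have := (gc x hx).2; simp [fgc]; omega⟩⟩
      · obtain ⟨ga, gb, gc⟩ := hg2 c hc
        exact ⟨ga, fun x hx => ⟨(gb x hx).1, by have := (gb x hx).2; simp [fgc]; omega⟩,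
          fun x hx => ⟨(gc x hx).1, by have := (gc x hx).2; simp [fgc]; omega⟩⟩
    · intro w
      rw [sat_and, hs1 w, hs2 w]
      constructor
      · rintro ⟨ha, hb⟩ c hc
        rcases List.mem_append.mp hc with hc | hc
        · exact ha c hc
        · exact hb c hc
      · intro h
        exact ⟨fun c hc => h c (List.mem_append_left _ hc),
          fun c hc => h c (List.mem_append_right _ hc)⟩
  | or h1 h2 ih1 ih2 =>
    obtain ⟨C1, hg1, hs1⟩ := ih1
    obtain ⟨C2, hg2, hs2⟩ := ih2
    refine ⟨C1.flatMap fun c1 => C2.map fun c2 =>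
      (LTL.or c1.1 c2.1, c1.2.1 ++ c2.2.1, c1.2.2 ++ c2.2.2), ?_, ?_⟩
    · intro c hc
      rw [List.mem_flatMap] at hc
      obtain ⟨c1, hc1, hc⟩ := hc
      rw [List.mem_map] at hc
      obtain ⟨c2, hc2, rfl⟩ := hc
      obtain ⟨g1a, g1b, g1c⟩ := hg1 c1 hc1
      obtain ⟨g2a, g2b, g2c⟩ := hg2 c2 hc2
      refine ⟨OnlyX.or g1a g2a, ?_, ?_⟩ <;> intro x hx <;>
        rcases List.mem_append.mp hx with hx | hx
      · exact ⟨(g1b x hx).1, by have := (g1b x hx).2; simp [fgc]; omega⟩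
      · exact ⟨(g2b x hx).1, by have := (g2b x hx).2; simp [fgc]; omega⟩
      · exact ⟨(g1c x hx).1, by have := (g1c x hx).2; simp [fgc]; omega⟩
      · exact ⟨(g2c x hx).1, by have := (g2c x hx).2; simp [fgc]; omega⟩
    · intro w
      rw [sat_or, hs1 w, hs2 w]
      have clsem : ∀ (c1 c2 : Cj Ap),
          SatCl w (LTL.or c1.1 c2.1, c1.2.1 ++ c2.2.1, c1.2.2 ++ c2.2.2) ↔
            SatCl w c1 ∨ SatCl w c2 := by
        intro c1 c2
        simp only [SatCl, sat_or, List.mem_append]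
        constructor
        · rintro ((h | h) | ⟨α, (hα | hα), h⟩ | ⟨β, (hβ | hβ), h⟩)
          · exact Or.inl (Or.inl h)
          · exact Or.inr (Or.inl h)
          · exact Or.inl (Or.inr (Or.inl ⟨α, hα, h⟩))
          · exact Or.inr (Or.inr (Or.inl ⟨α, hα, h⟩))
          · exact Or.inl (Or.inr (Or.inr ⟨β, hβ, h⟩))
          · exact Or.inr (Or.inr (Or.inr ⟨β, hβ, h⟩))
        · rintro ((h | ⟨α, hα, h⟩ | ⟨β, hβ, h⟩) | (h | ⟨α, hα, h⟩ | ⟨β, hβ, h⟩))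
          · exact Or.inl (Or.inl h)
          · exact Or.inr (Or.inl ⟨α, Or.inl hα, h⟩)
          · exact Or.inr (Or.inr ⟨β, Or.inl hβ, h⟩)
          · exact Or.inl (Or.inr h)
          · exact Or.inr (Or.inl ⟨α, Or.inr hα, h⟩)
          · exact Or.inr (Or.inr ⟨β, Or.inr hβ, h⟩)
      constructor
      · rintro (ha | hb) c hc
        · rw [List.mem_flatMap] at hc
          obtain ⟨c1, hc1, hc⟩ := hc
          rw [List.mem_map] at hc
          obtain ⟨c2, hc2, rfl⟩ := hc
          exact (clsem c1 c2).mpr (Or.inl (ha c1 hc1))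
        · rw [List.mem_flatMap] at hc
          obtain ⟨c1, hc1, hc⟩ := hc
          rw [List.mem_map] at hc
          obtain ⟨c2, hc2, rfl⟩ := hc
          exact (clsem c1 c2).mpr (Or.inr (hb c2 hc2))
      · intro h
        by_cases ha : ∀ c1 ∈ C1, SatCl w c1
        · exact Or.inl ha
        · push_neg at ha
          obtain ⟨c1, hc1, hnc1⟩ := ha
          refine Or.inr fun c2 hc2 => ?_
          have := h _ (List.mem_flatMap.mpr ⟨c1, hc1, List.mem_map.mpr ⟨c2, hc2, rfl⟩⟩)
          rcases (clsem c1 c2).mp this with h' | h'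
          · exact absurd h' hnc1
          · exact h'
  | next h1 ih =>
    obtain ⟨C, hg, hs⟩ := ih
    refine ⟨C.map fun c => (LTL.next c.1, c.2.1.map LTL.next, c.2.2.map LTL.next), ?_, ?_⟩
    · intro c hc
      rw [List.mem_map] at hc
      obtain ⟨c0, hc0, rfl⟩ := hc
      obtain ⟨ga, gb, gc⟩ := hg c0 hc0
      refine ⟨OnlyX.next ga, ?_, ?_⟩ <;> intro x hx <;>
        obtain ⟨x0, hx0, rfl⟩ := List.mem_map.mp hx
      · exact ⟨OnlyFGX.next (gb x0 hx0).1, by have := (gb x0 hx0).2; simpa [fgc] using this⟩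
      · exact ⟨OnlyFGX.next (gc x0 hx0).1, by have := (gc x0 hx0).2; simpa [fgc] using this⟩
    · intro w
      rw [sat_next, hs (suff w 1)]
      constructor
      · intro h c hc
        obtain ⟨c0, hc0, rfl⟩ := List.mem_map.mp hc
        rcases h c0 hc0 with h' | ⟨α, hα, h'⟩ | ⟨β, hβ, h'⟩
        · exact Or.inl h'
        · exact Or.inr (Or.inl ⟨_, List.mem_map.mpr ⟨α, hα, rfl⟩, sat_F_next.mpr h'⟩)
        · exact Or.inr (Or.inr ⟨_, List.mem_map.mpr ⟨β, hβ, rfl⟩, sat_G_next.mpr h'⟩)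
      · intro h c hc
        rcases h _ (List.mem_map.mpr ⟨c, hc, rfl⟩) with h' | ⟨α, hα, h'⟩ | ⟨β, hβ, h'⟩
        · exact Or.inl h'
        · obtain ⟨α0, hα0, rfl⟩ := List.mem_map.mp hα
          exact Or.inr (Or.inl ⟨α0, hα0, sat_F_next.mp h'⟩)
        · obtain ⟨β0, hβ0, rfl⟩ := List.mem_map.mp hβ
          exact Or.inr (Or.inr ⟨β0, hβ0, sat_G_next.mp h'⟩)
  | evtl h1 hih =>
    rename_i φ0
    clear hih
    refine ⟨[(.ff, [φ0], [])], ?_, ?_⟩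
    · simp only [List.mem_singleton, forall_eq, GoodC]
      exact ⟨OnlyX.ff, ⟨h1, by simp [LTL.F, fgc]⟩, by simp⟩
    · intro w
      simp [SatCl, Sat]
  | alws h1 hih =>
    rename_i φ0
    clear hih
    refine ⟨[(.ff, [], [φ0])], ?_, ?_⟩
    · simp only [List.mem_singleton, forall_eq, GoodC]
      exact ⟨OnlyX.ff, by simp, ⟨h1, by simp [LTL.G, fgc]⟩⟩
    · intro w
      simp [SatCl, Sat]

/-- GF of a conjunct -/
lemma GF_conj (w : ℕ → Set Ap) (c : Cj Ap) :
    (∀ i, ∃ p, i ≤ p ∧ SatC (suff w p) c) ↔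
      (SGF w c.1 ∧ (∀ α ∈ c.2.1, SGF w α) ∧ (∀ β ∈ c.2.2, SFG w β)) := by
  obtain ⟨ξ, As, Bs⟩ := c
  constructor
  · intro h
    refine ⟨fun i => ?_, fun α hα i => ?_, fun β hβ => ?_⟩
    · obtain ⟨p, hip, hs, -, -⟩ := h i
      exact ⟨p, hip, hs⟩
    · obtain ⟨p, hip, -, hF, -⟩ := h i
      obtain ⟨q, hpq, hq⟩ := (sat_F' p).mp (hF α hα)
      exact ⟨q, le_trans hip hpq, hq⟩
    · obtain ⟨p, -, -, -, hG⟩ := h 0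
      exact ⟨p, (sat_G' p).mp (hG β hβ)⟩
  · rintro ⟨hξ, hA, hB⟩ i
    obtain ⟨N, hN⟩ := listEv Bs (fun β p => Sat (suff w p) β) hB
    obtain ⟨p, hp, hsξ⟩ := hξ (max i N)
    refine ⟨p, le_trans (le_max_left _ _) hp, hsξ, ?_, ?_⟩
    · intro α hα
      obtain ⟨q, hpq, hq⟩ := hA α hα p
      exact (sat_F' p).mpr ⟨q, hpq, hq⟩
    · intro β hβ
      exact (sat_G' p).mpr fun q hq =>
        hN q (le_trans (le_trans (le_max_right _ _) hp) hq) β hβ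
/-- FG of a clause -/
lemma FG_clause (w : ℕ → Set Ap) (c : Cj Ap) :
    (∃ i, ∀ p, i ≤ p → SatCl (suff w p) c) ↔
      (SFG w c.1 ∨ (∃ α ∈ c.2.1, SGF w α) ∨ (∃ β ∈ c.2.2, SFG w β)) := by
  obtain ⟨ξ, As, Bs⟩ := c
  constructor
  · rintro ⟨i, h⟩
    by_cases hA : ∃ α ∈ As, SGF w α
    · exact Or.inr (Or.inl hA)
    by_cases hB : ∃ β ∈ Bs, SFG w β
    · exact Or.inr (Or.inr hB)
    push_neg at hA hB
    -- each F α eventually fails forever, each G β fails everywhere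
    have hA' : ∀ α ∈ As, ∃ N, ∀ p, N ≤ p → ¬ Sat (suff w p) (LTL.F α) := by
      intro α hα
      have := hA α hα
      simp only [SGF, not_forall, not_exists, not_and] at this
      obtain ⟨N, hN⟩ := this
      refine ⟨N, fun p hp hF => ?_⟩
      obtain ⟨q, hpq, hq⟩ := (sat_F' p).mp hF
      exact hN q (le_trans hp hpq) hq
    obtain ⟨N, hN⟩ := listEv As (fun α p => ¬ Sat (suff w p) (LTL.F α)) hA'
    have hB' : ∀ β ∈ Bs, ∀ p, ¬ Sat (suff w p) (LTL.G β) := by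
      intro β hβ p hG
      exact hB β hβ ⟨p, (sat_G' p).mp hG⟩
    refine Or.inl ⟨max i N, fun p hp => ?_⟩
    rcases h p (le_trans (le_max_left _ _) hp) with h' | ⟨α, hα, h'⟩ | ⟨β, hβ, h'⟩
    · exact h'
    · exact absurd h' (hN p (le_trans (le_max_right _ _) hp) α hα)
    · exact absurd h' (hB' β hβ p)
  · rintro (⟨i, h⟩ | ⟨α, hα, h⟩ | ⟨β, hβ, h⟩)
    · exact ⟨i, fun p hp => Or.inl (h p hp)⟩
    · refine ⟨0, fun p _ => Or.inr (Or.inl ⟨α, hα, ?_⟩)⟩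
      obtain ⟨q, hpq, hq⟩ := h p
      exact (sat_F' p).mpr ⟨q, hpq, hq⟩
    · obtain ⟨i, h⟩ := h
      refine ⟨i, fun p hp => Or.inr (Or.inr ⟨β, hβ, ?_⟩)⟩
      exact (sat_G' p).mpr fun q hq => h q (le_trans hp hq)

/-- existence of an equivalent FairFrag OnlyX formula for a semantic property -/
def Equiv' (P : (ℕ → Set Ap) → Prop) : Prop :=
  ∃ ψ : LTL Ap, FairFrag OnlyX ψ ∧ ∀ w, P w ↔ Sat w ψ

lemma E_congr {P Q : (ℕ → Set Ap) → Prop} (h : ∀ w, P w ↔ Q w) (hP : Equiv' P) :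
    Equiv' Q := by
  obtain ⟨ψ, h1, h2⟩ := hP
  exact ⟨ψ, h1, fun w => (h w).symm.trans (h2 w)⟩

lemma E_and {P Q : (ℕ → Set Ap) → Prop} (hP : Equiv' P) (hQ : Equiv' Q) :
    Equiv' (fun w => P w ∧ Q w) := by
  obtain ⟨ψ1, h1, h2⟩ := hP
  obtain ⟨ψ2, h3, h4⟩ := hQ
  exact ⟨.and ψ1 ψ2, .and h1 h3, fun w =>
    ((and_congr (h2 w) (h4 w)).trans sat_and.symm)⟩

lemma E_or {P Q : (ℕ → Set Ap) → Prop} (hP : Equiv' P) (hQ : Equiv' Q) :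
    Equiv' (fun w => P w ∨ Q w) := by
  obtain ⟨ψ1, h1, h2⟩ := hP
  obtain ⟨ψ2, h3, h4⟩ := hQ
  exact ⟨.or ψ1 ψ2, .or h1 h3, fun w =>
    ((or_congr (h2 w) (h4 w)).trans sat_or.symm)⟩

lemma E_GF {ξ : LTL Ap} (hξ : OnlyX ξ) : Equiv' (fun w => SGF w ξ) :=
  ⟨LTL.G (LTL.F ξ), .GF hξ, fun _ => sat_GF.symm⟩

lemma E_FG {ξ : LTL Ap} (hξ : OnlyX ξ) : Equiv' (fun w => SFG w ξ) :=
  ⟨LTL.F (LTL.G ξ), .FG hξ, fun _ => sat_FG.symm⟩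

lemma E_true : Equiv' (fun _ : ℕ → Set Ap => True) := by
  refine E_congr (Q := fun _ => True) (fun w => ?_) (E_GF (Ap := Ap) OnlyX.tt)
  simp only [iff_true]
  exact fun i => ⟨i, le_refl i, trivial⟩

lemma E_false : Equiv' (fun _ : ℕ → Set Ap => False) := by
  refine E_congr (Q := fun _ => False) (fun w => ?_) (E_GF (Ap := Ap) OnlyX.ff)
  simp only [iff_false, SGF]
  intro h
  obtain ⟨p, -, hp⟩ := h 0
  exact hp

lemma E_listAll {X : Type*} (L : List X) (P : X → (ℕ → Set Ap) → Prop)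
    (h : ∀ x ∈ L, Equiv' (P x)) : Equiv' (fun w => ∀ x ∈ L, P x w) := by
  induction L with
  | nil => exact E_congr (by simp) E_true
  | cons a L ih =>
    have := E_and (h a (by simp)) (ih fun x hx => h x (by simp [hx]))
    refine E_congr (fun w => ?_) this
    simp only [List.mem_cons]
    constructor
    · rintro ⟨h1, h2⟩ x (rfl | hx)
      · exact h1
      · exact h2 x hx
    · intro h'
      exact ⟨h' a (Or.inl rfl), fun x hx => h' x (Or.inr hx)⟩

lemma E_listEx {X : Type*} (L : List X) (P : X → (ℕ → Set Ap) → Prop)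
    (h : ∀ x ∈ L, Equiv' (P x)) : Equiv' (fun w => ∃ x ∈ L, P x w) := by
  induction L with
  | nil => exact E_congr (by simp) E_false
  | cons a L ih =>
    have := E_or (h a (by simp)) (ih fun x hx => h x (by simp [hx]))
    refine E_congr (fun w => ?_) this
    simp only [List.mem_cons]
    constructor
    · rintro (h1 | ⟨x, hx, h2⟩)
      · exact ⟨a, Or.inl rfl, h1⟩
      · exact ⟨x, Or.inr hx, h2⟩
    · rintro ⟨x, (rfl | hx), h2⟩
      · exact Or.inl h2
      · exact Or.inr ⟨x, hx, h2⟩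

theorem main : ∀ n : ℕ, ∀ φ : LTL Ap, OnlyFGX φ → fgc φ ≤ n →
    Equiv' (fun w => SGF w φ) ∧ Equiv' (fun w => SFG w φ) := by
  intro n
  induction n using Nat.strong_induction_on with
  | _ n ih =>
    intro φ hφ hn
    constructor
    · -- GF part via DNF
      obtain ⟨D, hg, hs⟩ := dnf hφ
      have key : ∀ w, SGF w φ ↔
          ∃ c ∈ D, (SGF w c.1 ∧ (∀ α ∈ c.2.1, SGF w α) ∧ (∀ β ∈ c.2.2, SFG w β)) := by
        intro w
        have step1 : SGF w φ ↔ ∃ c ∈ D, ∀ i, ∃ p, i ≤ p ∧ SatC (suff w p) c := by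
          constructor
          · intro h
            apply pigeon
            intro i
            obtain ⟨p, hip, hp⟩ := h i
            obtain ⟨c, hc, hsc⟩ := (hs (suff w p)).mp hp
            exact ⟨p, hip, c, hc, hsc⟩
          · rintro ⟨c, hc, h⟩ i
            obtain ⟨p, hip, hp⟩ := h i
            exact ⟨p, hip, (hs (suff w p)).mpr ⟨c, hc, hp⟩⟩
        rw [step1]
        exact exists_congr fun c => and_congr_right fun _ => GF_conj w c
      refine E_congr (fun w => (key w).symm) ?_
      apply E_listEx
      intro c hc
      obtain ⟨ga, gb, gc⟩ := hg c hc
      refine E_and (E_GF ga) (E_and ?_ ?_)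
      · apply E_listAll
        intro α hα
        have h' := gb α hα
        exact (ih (fgc α) (lt_of_lt_of_le h'.2 hn) α h'.1 le_rfl).1
      · apply E_listAll
        intro β hβ
        have h' := gc β hβ
        exact (ih (fgc β) (lt_of_lt_of_le h'.2 hn) β h'.1 le_rfl).2
    · -- FG part via CNF
      obtain ⟨C, hg, hs⟩ := cnf hφ
      have key : ∀ w, SFG w φ ↔
          ∀ c ∈ C, (SFG w c.1 ∨ (∃ α ∈ c.2.1, SGF w α) ∨ (∃ β ∈ c.2.2, SFG w β)) := by
        intro w
        have step1 : SFG w φ ↔ ∀ c ∈ C, ∃ i, ∀ p, i ≤ p → SatCl (suff w p) c := by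
          constructor
          · rintro ⟨i, h⟩ c hc
            exact ⟨i, fun p hp => (hs (suff w p)).mp (h p hp) c hc⟩
          · intro h
            obtain ⟨N, hN⟩ := listEv C (fun c p => SatCl (suff w p) c) h
            exact ⟨N, fun p hp => (hs (suff w p)).mpr (hN p hp)⟩
        rw [step1]
        exact forall_congr' fun c => forall_congr' fun _ => FG_clause w c
      refine E_congr (fun w => (key w).symm) ?_
      apply E_listAll
      intro c hc
      obtain ⟨ga, gb, gc⟩ := hg c hc
      refine E_or (E_FG ga) (E_or ?_ ?_)
      · apply E_listEx
        intro α hα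
        have h' := gb α hα
        exact (ih (fgc α) (lt_of_lt_of_le h'.2 hn) α h'.1 le_rfl).1
      · apply E_listEx
        intro β hβ
        have h' := gc β hβ
        exact (ih (fgc β) (lt_of_lt_of_le h'.2 hn) β h'.1 le_rfl).2

end FairAux

theorem fairness_normal_form {Ap : Type} (φ : LTL Ap) (h : FairFrag OnlyFGX φ) :
    ∃ ψ : LTL Ap, FairFrag OnlyX ψ ∧ ∀ w : ℕ → Set Ap, Sat w φ ↔ Sat w ψ := by
  induction h with
  | FG hφ =>
    rename_i φ0
    obtain ⟨ψ, h1, h2⟩ := (FairAux.main (FairAux.fgc φ0) φ0 hφ le_rfl).2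
    exact ⟨ψ, h1, fun w => FairAux.sat_FG.trans (h2 w)⟩
  | GF hφ =>
    rename_i φ0
    obtain ⟨ψ, h1, h2⟩ := (FairAux.main (FairAux.fgc φ0) φ0 hφ le_rfl).1
    exact ⟨ψ, h1, fun w => FairAux.sat_GF.trans (h2 w)⟩
  | and h1 h2 ih1 ih2 =>
    obtain ⟨ψ1, ha, hb⟩ := ih1
    obtain ⟨ψ2, hc, hd⟩ := ih2
    exact ⟨.and ψ1 ψ2, .and ha hc, fun w => by
      rw [FairAux.sat_and, FairAux.sat_and, hb w, hd w]⟩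
  | or h1 h2 ih1 ih2 =>
    obtain ⟨ψ1, ha, hb⟩ := ih1
    obtain ⟨ψ2, hc, hd⟩ := ih2
    exact ⟨.or ψ1 ψ2, .or ha hc, fun w => by
      rw [FairAux.sat_or, FairAux.sat_or, hb w, hd w]⟩
end

section
/- Let φ be an LTL(X) formula (only literals, ∧, ∨, and X) and let H(φ) be its relevant history, defined recursively by H(tt) = H(ff) = ε, H(a) = H(¬a) = {a} (a one-letter word), H(φ∧ψ) = H(φ∨ψ) = H(φ) ⊔ H(ψ) (pointwise union, padding the shorter word with its own letters), and H(Xφ) = ∅·H(φ). Then for every ω-word w over 2^Ap, w ⊨ φ if and only if w ⊓ H(φ) ⊨ φ, where w ⊓ H(φ) is the ω-word obtained by intersecting w pointwise with H(φ) and continuing with ∅ afterwards. -/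
/-- pointwise union of finite words, padding the shorter one -/
def lunion {Ap : Type} : List (Set Ap) → List (Set Ap) → List (Set Ap)
  | [], v => v
  | u, [] => u
  | a :: u, b :: v => (a ∪ b) :: lunion u v

/-- the relevant history H(φ) of an LTL(X) formula -/
def hist {Ap : Type} : LTL Ap → List (Set Ap)
  | .atom a => [{a}]
  | .natom a => [{a}]
  | .and φ ψ => lunion (hist φ) (hist ψ)
  | .or φ ψ => lunion (hist φ) (hist ψ)
  | .next φ => ∅ :: hist φ
  | _ => []


lemma lunion_getD {Ap : Type} (u v : List (Set Ap)) (i : ℕ) :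
    (lunion u v).getD i ∅ = u.getD i ∅ ∪ v.getD i ∅ := by
  induction u generalizing v i with
  | nil => simp [lunion]
  | cons a u ih =>
    cases v with
    | nil => simp [lunion]
    | cons b v =>
      cases i with
      | zero => simp [lunion]
      | succ n => simpa [lunion] using ih v n

lemma sat_agree {Ap : Type} {φ : LTL Ap} (h : OnlyX φ) :
    ∀ w w' : ℕ → Set Ap,
      (∀ i, w i ∩ (hist φ).getD i ∅ = w' i ∩ (hist φ).getD i ∅) →
      (Sat w φ ↔ Sat w' φ) := by
  induction h with
  | tt => intro w w' _; simp [Sat]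
  | ff => intro w w' _; simp [Sat]
  | atom a =>
    intro w w' hw
    have := hw 0
    simp only [hist, List.getD_cons_zero] at this
    constructor
    · intro hs
      have : a ∈ w' 0 ∩ {a} := by
        rw [← this]; exact ⟨hs, rfl⟩
      exact this.1
    · intro hs
      have : a ∈ w 0 ∩ {a} := by
        rw [this]; exact ⟨hs, rfl⟩
      exact this.1
  | natom a =>
    intro w w' hw
    have := hw 0
    simp only [hist, List.getD_cons_zero] at this
    constructor
    · intro hs hs'
      have h2 : a ∈ w 0 ∩ {a} := by rw [this]; exact ⟨hs', rfl⟩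
      exact hs h2.1
    · intro hs hs'
      have h2 : a ∈ w' 0 ∩ {a} := by rw [← this]; exact ⟨hs', rfl⟩
      exact hs h2.1
  | @and φ ψ _ _ ih1 ih2 =>
    intro w w' hw
    have h1 : ∀ i, w i ∩ (hist φ).getD i ∅ = w' i ∩ (hist φ).getD i ∅ := by
      intro i
      have := hw i
      simp only [hist, lunion_getD] at this
      have e1 : w i ∩ (hist φ).getD i ∅
          = (w i ∩ ((hist φ).getD i ∅ ∪ (hist ψ).getD i ∅)) ∩ (hist φ).getD i ∅ := by
        ext x; simp [Set.mem_inter_iff]; tauto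
      have e2 : w' i ∩ (hist φ).getD i ∅
          = (w' i ∩ ((hist φ).getD i ∅ ∪ (hist ψ).getD i ∅)) ∩ (hist φ).getD i ∅ := by
        ext x; simp [Set.mem_inter_iff]; tauto
      rw [e1, e2, this]
    have h2 : ∀ i, w i ∩ (hist ψ).getD i ∅ = w' i ∩ (hist ψ).getD i ∅ := by
      intro i
      have := hw i
      simp only [hist, lunion_getD] at this
      have e1 : w i ∩ (hist ψ).getD i ∅
          = (w i ∩ ((hist φ).getD i ∅ ∪ (hist ψ).getD i ∅)) ∩ (hist ψ).getD i ∅ := by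
        ext x; simp [Set.mem_inter_iff]; tauto
      have e2 : w' i ∩ (hist ψ).getD i ∅
          = (w' i ∩ ((hist φ).getD i ∅ ∪ (hist ψ).getD i ∅)) ∩ (hist ψ).getD i ∅ := by
        ext x; simp [Set.mem_inter_iff]; tauto
      rw [e1, e2, this]
    simp only [Sat]
    rw [ih1 w w' h1, ih2 w w' h2]
  | @or φ ψ _ _ ih1 ih2 =>
    intro w w' hw
    have h1 : ∀ i, w i ∩ (hist φ).getD i ∅ = w' i ∩ (hist φ).getD i ∅ := by
      intro i
      have := hw i
      simp only [hist, lunion_getD] at this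
      have e1 : w i ∩ (hist φ).getD i ∅
          = (w i ∩ ((hist φ).getD i ∅ ∪ (hist ψ).getD i ∅)) ∩ (hist φ).getD i ∅ := by
        ext x; simp [Set.mem_inter_iff]; tauto
      have e2 : w' i ∩ (hist φ).getD i ∅
          = (w' i ∩ ((hist φ).getD i ∅ ∪ (hist ψ).getD i ∅)) ∩ (hist φ).getD i ∅ := by
        ext x; simp [Set.mem_inter_iff]; tauto
      rw [e1, e2, this]
    have h2 : ∀ i, w i ∩ (hist ψ).getD i ∅ = w' i ∩ (hist ψ).getD i ∅ := by
      intro i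
      have := hw i
      simp only [hist, lunion_getD] at this
      have e1 : w i ∩ (hist ψ).getD i ∅
          = (w i ∩ ((hist φ).getD i ∅ ∪ (hist ψ).getD i ∅)) ∩ (hist ψ).getD i ∅ := by
        ext x; simp [Set.mem_inter_iff]; tauto
      have e2 : w' i ∩ (hist ψ).getD i ∅
          = (w' i ∩ ((hist φ).getD i ∅ ∪ (hist ψ).getD i ∅)) ∩ (hist ψ).getD i ∅ := by
        ext x; simp [Set.mem_inter_iff]; tauto
      rw [e1, e2, this]
    simp only [Sat]
    rw [ih1 w w' h1, ih2 w w' h2]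
  | @next φ _ ih =>
    intro w w' hw
    simp only [Sat]
    apply ih
    intro i
    have h1 := hw (i + 1)
    simp only [hist, List.getD_cons_succ] at h1
    simpa [suff, Nat.add_comm] using h1

theorem relevant_history {Ap : Type} (φ : LTL Ap) (h : OnlyX φ) (w : ℕ → Set Ap) :
    Sat w φ ↔ Sat (fun i => w i ∩ (hist φ).getD i ∅) φ := by
  apply sat_agree h
  intro i
  ext x
  simp [Set.mem_inter_iff]
end

section
/- For every ω-word w and LTL formulas φ, ψ, w satisfies FG(φ U ψ) if and only if w satisfies GF ψ ∧ FG(φ ∨ ψ). -/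
lemma suff_suff {Ap : Type} (w : ℕ → Set Ap) (i j : ℕ) :
    suff (suff w i) j = suff w (i + j) := by
  funext k; simp [suff, Nat.add_assoc]

lemma suff_zero {Ap : Type} (w : ℕ → Set Ap) : suff w 0 = w := by
  funext k; simp [suff]

lemma satF {Ap : Type} (w : ℕ → Set Ap) (χ : LTL Ap) :
    Sat w (LTL.F χ) ↔ ∃ i, Sat (suff w i) χ := by
  constructor
  · rintro ⟨i, h, -⟩; exact ⟨i, h⟩
  · rintro ⟨i, h⟩; exact ⟨i, h, fun j _ => trivial⟩

lemma satG {Ap : Type} (w : ℕ → Set Ap) (χ : LTL Ap) :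
    Sat w (LTL.G χ) ↔ ∀ i, Sat (suff w i) χ := by
  constructor
  · rintro (h | ⟨i, hff, _⟩)
    · exact h
    · exact absurd hff id
  · exact fun h => Or.inl h

theorem FG_untl {Ap : Type} (w : ℕ → Set Ap) (φ ψ : LTL Ap) :
    Sat w (LTL.F (LTL.G (LTL.untl φ ψ))) ↔
      Sat w (LTL.and (LTL.G (LTL.F ψ)) (LTL.F (LTL.G (LTL.or φ ψ)))) := by
  show Sat w (LTL.F _) ↔ Sat w (LTL.G _) ∧ Sat w (LTL.F _)
  simp only [satF, satG]
  constructor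
  · rintro ⟨i, hG⟩
    constructor
    · intro m
      obtain ⟨k, hk, -⟩ := hG m
      refine ⟨i + k, ?_⟩
      rw [suff_suff, suff_suff] at hk
      rw [suff_suff]
      rwa [show m + (i + k) = i + (m + k) by omega]
    · refine ⟨i, ?_⟩
      intro j
      obtain ⟨k, hk, hφ⟩ := hG j
      rcases Nat.eq_zero_or_pos k with rfl | hkpos
      · exact Or.inr (by rwa [suff_zero] at hk)
      · exact Or.inl (by have := hφ 0 hkpos; rwa [suff_zero] at this)
  · rintro ⟨hGF, ⟨i, hG⟩⟩
    refine ⟨i, ?_⟩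
    intro j
    show ∃ k, Sat (suff (suff (suff w i) j) k) ψ ∧
      ∀ l < k, Sat (suff (suff (suff w i) j) l) φ
    simp only [suff_suff]
    have hex : ∃ k, Sat (suff w (i + j + k)) ψ := by
      obtain ⟨k, hk⟩ := hGF (i + j)
      rw [suff_suff] at hk
      exact ⟨k, hk⟩
    classical
    refine ⟨Nat.find hex, Nat.find_spec hex, fun l hl => ?_⟩
    have hnψ := Nat.find_min hex hl
    have := hG (j + l)
    rw [suff_suff, show i + (j + l) = i + j + l by omega] at this
    rcases this with hφ | hψ
    · exact hφ
    · exact absurd hψ hnψ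
end
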